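/- For all integers q≥2 and D≥4 with D not divisible by 6, there exists no distance-regular graph with classical parameters (D, q, q, q²(q^D−1)/(q−1)). -/

import Mathlib

open Finset

/-- The Gaussian bracket `[j] = 1 + q + ⋯ + q^(j-1)`. -/
def gaussBracket (q : ℤ) (j : ℕ) : ℤ := ∑ l ∈ Finset.range j, q ^ l

/-- `G` is a distance-regular graph with diameter `D` and intersection numbers `p h i j`,
where `p h i j = |Γ_i(x) ∩ Γ_j(y)|` for any vertices `x, y` at distance `h`. -/
def IsDRGWith {X : Type*} [Fintype X] (G : SimpleGraph X) (D : ℕ)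
    (p : ℕ → ℕ → ℕ → ℕ) : Prop :=
  G.Connected ∧ (∀ x y : X, G.dist x y ≤ D) ∧ (∃ x y : X, G.dist x y = D) ∧
    ∀ h i j : ℕ, h ≤ D → i ≤ D → j ≤ D → ∀ x y : X, G.dist x y = h →
      Set.ncard {z : X | G.dist x z = i ∧ G.dist y z = j} = p h i j

/-- `G` is a distance-regular graph with classical parameters `(D, q, α, β)` and
intersection numbers `p`. -/
def HasClassicalParams {X : Type*} [Fintype X] (G : SimpleGraph X) (D : ℕ)
    (p : ℕ → ℕ → ℕ → ℕ) (q : ℤ) (α β : ℚ) : Prop :=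
  IsDRGWith G D p ∧ q ≠ 0 ∧ q ≠ -1 ∧
    (∀ i : ℕ, 1 ≤ i → i ≤ D →
      (p i 1 (i - 1) : ℚ) =
        (gaussBracket q i : ℚ) * (1 + α * (gaussBracket q (i - 1) : ℚ))) ∧
    (∀ i : ℕ, i + 1 ≤ D →
      (p i 1 (i + 1) : ℚ) =
        ((gaussBracket q D : ℚ) - (gaussBracket q i : ℚ)) * (β - α * (gaussBracket q i : ℚ)))

/-- The `i`-th dual idempotent `E*_i(x)` of `G` with respect to the base vertex `x`. -/
noncomputable def dualIdem {X : Type*} [Fintype X] [DecidableEq X] (G : SimpleGraph X)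
    (x : X) (i : ℕ) : Matrix X X ℂ :=
  Matrix.diagonal fun y => if G.dist x y = i then 1 else 0

/-- The Terwilliger algebra `T(x)`: the subalgebra of `Mat_X(ℂ)` generated by the
adjacency matrix of `G` and the dual idempotents `E*_i(x)`. -/
noncomputable def terwilliger {X : Type*} [Fintype X] [DecidableEq X] (G : SimpleGraph X)
    [DecidableRel G.Adj] (x : X) : Subalgebra ℂ (Matrix X X ℂ) :=
  Algebra.adjoin ℂ ({G.adjMatrix ℂ} ∪ Set.range (dualIdem G x))

/-- The lowering matrix `L = ∑_{i=1}^{D} E*_{i-1} A E*_i`. -/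
noncomputable def lowering {X : Type*} [Fintype X] [DecidableEq X] (G : SimpleGraph X)
    [DecidableRel G.Adj] (x : X) (D : ℕ) : Matrix X X ℂ :=
  ∑ i ∈ Finset.Icc 1 D, dualIdem G x (i - 1) * G.adjMatrix ℂ * dualIdem G x i

/-- The raising matrix `R = ∑_{i=0}^{D-1} E*_{i+1} A E*_i`. -/
noncomputable def raising {X : Type*} [Fintype X] [DecidableEq X] (G : SimpleGraph X)
    [DecidableRel G.Adj] (x : X) (D : ℕ) : Matrix X X ℂ :=
  ∑ i ∈ Finset.range D, dualIdem G x (i + 1) * G.adjMatrix ℂ * dualIdem G x i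

/-- The Terwilliger algebra `T_f(x)` of the bipartite graph `Γ_f(x)`: the subalgebra of
`Mat_X(ℂ)` generated by `L`, `R` and the dual idempotents `E*_i(x)`. -/
noncomputable def terwilligerF {X : Type*} [Fintype X] [DecidableEq X] (G : SimpleGraph X)
    [DecidableRel G.Adj] (x : X) (D : ℕ) : Subalgebra ℂ (Matrix X X ℂ) :=
  Algebra.adjoin ℂ ({lowering G x D, raising G x D} ∪ Set.range (dualIdem G x))

/-- `W` is a `T`-module: a subspace of the standard module `V = ℂ^X`
invariant under every member of `T`. -/
def IsTMod {X : Type*} [Fintype X] [DecidableEq X] (T : Subalgebra ℂ (Matrix X X ℂ))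
    (W : Submodule ℂ (X → ℂ)) : Prop :=
  ∀ B ∈ T, ∀ w ∈ W, B.mulVec w ∈ W

/-- `W` is an irreducible `T`-module. -/
def IsIrredTMod {X : Type*} [Fintype X] [DecidableEq X] (T : Subalgebra ℂ (Matrix X X ℂ))
    (W : Submodule ℂ (X → ℂ)) : Prop :=
  IsTMod T W ∧ W ≠ ⊥ ∧
    ∀ W' : Submodule ℂ (X → ℂ), W' ≤ W → IsTMod T W' → W' = ⊥ ∨ W' = W

/-- The subspace `E*_i W`. -/
noncomputable def subconst {X : Type*} [Fintype X] [DecidableEq X] (G : SimpleGraph X)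
    (x : X) (i : ℕ) (W : Submodule ℂ (X → ℂ)) : Submodule ℂ (X → ℂ) :=
  W.map (dualIdem G x i).mulVecLin

/-- `W` has endpoint `r`, i.e. `r = min {i : E*_i W ≠ 0}`. -/
def HasEndpoint {X : Type*} [Fintype X] [DecidableEq X] (G : SimpleGraph X) (x : X)
    (W : Submodule ℂ (X → ℂ)) (r : ℕ) : Prop :=
  subconst G x r W ≠ ⊥ ∧ ∀ i < r, subconst G x i W = ⊥

/-- `W` is thin: `dim E*_i W ≤ 1` for all `i`. -/
def IsThin {X : Type*} [Fintype X] [DecidableEq X] (G : SimpleGraph X) (x : X)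
    (W : Submodule ℂ (X → ℂ)) : Prop :=
  ∀ i : ℕ, Module.finrank ℂ (subconst G x i W) ≤ 1

/-- The diameter of the module `W`: `|{i : E*_i W ≠ 0}| - 1`. -/
noncomputable def modDiameter {X : Type*} [Fintype X] [DecidableEq X] (G : SimpleGraph X)
    (x : X) (W : Submodule ℂ (X → ℂ)) : ℕ :=
  Set.ncard {i : ℕ | subconst G x i W ≠ ⊥} - 1

/-- `W` and `W'` are isomorphic as `T`-modules: there is a linear isomorphism
`σ : W → W'` with `σ B = B σ` on `W` for all `B ∈ T`. -/
def TIso {X : Type*} [Fintype X] [DecidableEq X] (T : Subalgebra ℂ (Matrix X X ℂ))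
    (W W' : Submodule ℂ (X → ℂ)) : Prop :=
  ∃ σ : W ≃ₗ[ℂ] W', ∀ B ∈ T, ∀ (w : W) (hw : B.mulVec (w : X → ℂ) ∈ W),
    ((σ ⟨B.mulVec (w : X → ℂ), hw⟩ : W') : X → ℂ) = B.mulVec ((σ w : W') : X → ℂ)

/-- The entries of a tridiagonal parameter matrix with diagonal `1`, subdiagonal
entries `e⁻` and superdiagonal entries `e⁺` (rows and columns indexed `1, …, D`). -/
def pmEntry (em ep : ℕ → ℂ) (i j : ℕ) : ℂ :=
  if i = j then 1 else if i = j + 1 then em i else if j = i + 1 then ep i else 0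

/-- `Γ` supports a uniform structure with respect to `x`: there exist a parameter matrix
`U = (e_{ij})_{1 ≤ i,j ≤ D}` and a vector `f ∈ ℂ^D` such that
`(e⁻_i RL² + LRL + e⁺_i L²R) v = f_i L v` for every `v ∈ E*_i V` and `1 ≤ i ≤ D`,
where `L` and `R` are the lowering and raising matrices of the bipartite graph `Γ_f(x)`
(equivalently, of `Γ`) with respect to `x`. -/
def SupportsUniform {X : Type*} [Fintype X] [DecidableEq X] (G : SimpleGraph X)
    [DecidableRel G.Adj] (x : X) (D : ℕ) : Prop :=
  ∃ em ep f : ℕ → ℂ,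
    em 1 = 0 ∧ ep D = 0 ∧
    ((∀ i : ℕ, 2 ≤ i → i ≤ D → em i ≠ 0) ∨ (∀ i : ℕ, 2 ≤ i → i ≤ D → ep (i - 1) ≠ 0)) ∧
    (∀ s t : ℕ, 1 ≤ s → s ≤ t → t ≤ D →
      (Matrix.of fun a b : Fin (t - s + 1) =>
        pmEntry em ep (s + (a : ℕ)) (s + (b : ℕ))).det ≠ 0) ∧
    (∀ i : ℕ, 1 ≤ i → i ≤ D → ∀ v : X → ℂ, (∀ y : X, G.dist x y ≠ i → v y = 0) →
      (em i • (raising G x D * lowering G x D * lowering G x D)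
        + lowering G x D * raising G x D * lowering G x D
        + ep i • (lowering G x D * lowering G x D * raising G x D)).mulVec v
        = f i • (lowering G x D).mulVec v)

/-- `H` is a strongly regular graph with parameters `(n, k, λ, μ)`. -/
def IsSRGcard {Y : Type*} [Fintype Y] (H : SimpleGraph Y) (n k l m : ℕ) : Prop :=
  Fintype.card Y = n ∧
    (∀ v : Y, Set.ncard (H.neighborSet v) = k) ∧
    (∀ v w : Y, H.Adj v w → Set.ncard (H.neighborSet v ∩ H.neighborSet w) = l) ∧
    (∀ v w : Y, v ≠ w → ¬ H.Adj v w → Set.ncard (H.neighborSet v ∩ H.neighborSet w) = m)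

open scoped Classical in
/-- The adjacency matrix of a graph over `ℝ`. -/
noncomputable def adjMatR {Y : Type*} [Fintype Y] (H : SimpleGraph Y) : Matrix Y Y ℝ :=
  Matrix.of fun a b => if H.Adj a b then (1 : ℝ) else 0

namespace DRGaux

def bbI (q : ℤ) (D : ℕ) (j : ℕ) : ℤ :=
  (gaussBracket q D - gaussBracket q j) * (q * (q * gaussBracket q D - gaussBracket q j))

lemma gb_succ (q : ℤ) (n : ℕ) : gaussBracket q (n+1) = q * gaussBracket q n + 1 :=
  geom_sum_succ
lemma gb_zero (q : ℤ) : gaussBracket q 0 = 0 := by simp [gaussBracket]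
lemma gb_one (q : ℤ) : gaussBracket q 1 = 1 := by simp [gaussBracket]
lemma gb_two (q : ℤ) : gaussBracket q 2 = 1 + q := by
  simp [gaussBracket, Finset.sum_range_succ]
lemma gb_three (q : ℤ) : gaussBracket q 3 = 1 + q + q^2 := by
  simp [gaussBracket, Finset.sum_range_succ]
lemma gb_add (q : ℤ) (a c : ℕ) :
    gaussBracket q (a + c) = gaussBracket q a + q ^ a * gaussBracket q c := by
  rw [gaussBracket, Finset.sum_range_add, gaussBracket, gaussBracket, Finset.mul_sum]
  congr 1
  exact Finset.sum_congr rfl fun i _ => by rw [pow_add]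
lemma gb_dvd (q : ℤ) (a s : ℕ) : gaussBracket q a ∣ gaussBracket q (a * s) := by
  induction s with
  | zero => simp [gb_zero]
  | succ s ih =>
      rw [Nat.mul_succ, gb_add]
      exact dvd_add ih (Dvd.dvd.mul_left dvd_rfl _)
lemma gb_pos {q : ℤ} (hq : 2 ≤ q) {n : ℕ} (hn : 1 ≤ n) : 0 < gaussBracket q n := by
  rw [gaussBracket]
  apply Finset.sum_pos
  · intro l _; positivity
  · exact Finset.nonempty_range_iff.mpr (by omega)

variable {K : Type*} [CommRing K]

lemma qpow_cast_one {q : ℤ} {n : ℕ}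
    (h0 : ((gaussBracket q n : ℤ) : K) = 0) : ((q : K)) ^ n = 1 := by
  have h := geom_sum_mul (q : K) n
  have h2 : ((gaussBracket q n : ℤ) : K) = ∑ i ∈ Finset.range n, (q:K)^i := by
    push_cast [gaussBracket]; rfl
  rw [h2] at h0
  rw [h0, zero_mul] at h
  linear_combination -h

lemma qpow_cast_mod {q : ℤ} {n : ℕ} (h0 : ((gaussBracket q n : ℤ) : K) = 0) (u : ℕ) :
    ((q : K)) ^ u = (q : K) ^ (u % n) := by
  conv_lhs => rw [show u = n * (u / n) + u % n from (Nat.div_add_mod u n).symm]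
  rw [pow_add, pow_mul, qpow_cast_one h0, one_pow, one_mul]

lemma gb_cast_mod {q : ℤ} {n : ℕ} (h0 : ((gaussBracket q n : ℤ) : K) = 0) (u : ℕ) :
    ((gaussBracket q u : ℤ) : K) = ((gaussBracket q (u % n) : ℤ) : K) := by
  conv_lhs => rw [show u = n * (u / n) + u % n from (Nat.div_add_mod u n).symm]
  rw [gb_add]
  obtain ⟨c, hc⟩ := gb_dvd q n (u / n)
  push_cast [hc]
  rw [h0]
  have : ((q:K))^(n * (u/n)) = 1 := by
    rw [pow_mul, qpow_cast_one h0, one_pow]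
  rw [this]
  ring

lemma bbI_eq {q : ℤ} {D j : ℕ} (hj : j ≤ D) :
    bbI q D j = gaussBracket q (D - j) * (q^(j+1) * (q^j * gaussBracket q (D+1-j) - 1)) := by
  have h1 : gaussBracket q D = gaussBracket q j + q ^ j * gaussBracket q (D - j) := by
    rw [← gb_add]; congr 1; omega
  have h2 : gaussBracket q (D+1) = gaussBracket q j + q ^ j * gaussBracket q (D + 1 - j) := by
    rw [← gb_add]; congr 1; omega
  have h3 : gaussBracket q (D+1) = q * gaussBracket q D + 1 := gb_succ q D
  have h5 : q * gaussBracket q D - gaussBracket q j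
      = q ^ j * gaussBracket q (D+1-j) - 1 := by linear_combination h2 - h3
  have h6 : gaussBracket q D - gaussBracket q j = q ^ j * gaussBracket q (D - j) := by
    linear_combination h1
  rw [bbI, h6, h5]; ring

lemma reindex1 (n M : ℕ) (hn : 1 ≤ n) :
    (Finset.Icc 1 (n*M)).filter (fun u => n ∣ u) = (Finset.Icc 1 M).image (fun s => n * s) := by
  ext u
  simp only [Finset.mem_filter, Finset.mem_Icc, Finset.mem_image]
  constructor
  · rintro ⟨⟨h1, h2⟩, c, rfl⟩
    exact ⟨c, ⟨by nlinarith, by exact Nat.le_of_mul_le_mul_left h2 (by omega)⟩, rfl⟩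
  · rintro ⟨s, ⟨hs1, hs2⟩, rfl⟩
    exact ⟨⟨by nlinarith, Nat.mul_le_mul_left n hs2⟩, Dvd.intro s rfl⟩

lemma reindex2 (n M D : ℕ) (hn : 1 ≤ n) (h1 : n*M ≤ D) (h2 : D < n*M + n) :
    (Finset.range (n*M)).filter (fun j => j % n = D % n)
      = (Finset.Icc 1 M).image (fun s => D - n * s) := by
  ext j
  simp only [Finset.mem_filter, Finset.mem_range, Finset.mem_Icc, Finset.mem_image]
  constructor
  · rintro ⟨hj, hmod⟩
    have hj1 := Nat.div_add_mod j n
    have hD1 := Nat.div_add_mod D n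
    have hab : j / n < D / n := by
      by_contra hcon
      push_neg at hcon
      have := Nat.mul_le_mul_left n hcon
      omega
    refine ⟨D / n - j / n, ⟨by omega, ?_⟩, ?_⟩
    · have key : n * (D / n - j / n) + n * (j / n) = n * (D / n) := by
        rw [← Nat.mul_add, Nat.sub_add_cancel hab.le]
      have hlt : n * (D / n - j / n) < n * (M + 1) := by
        have : n * (M+1) = n * M + n := by ring
        omega
      have := Nat.lt_of_mul_lt_mul_left hlt
      omega
    · have key : n * (D / n - j / n) + n * (j / n) = n * (D / n) := by
        rw [← Nat.mul_add, Nat.sub_add_cancel hab.le]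
      omega
  · rintro ⟨s, ⟨hs1, hs2⟩, rfl⟩
    have hns : n * s ≤ n * M := Nat.mul_le_mul_left n hs2
    have hn1 : n * 1 ≤ n * s := Nat.mul_le_mul_left n hs1
    constructor
    · omega
    · have hDns : D - n * s + n * s = D := by omega
      conv_rhs => rw [← hDns]
      rw [Nat.add_mul_mod_self_left]

lemma keyIdentity (q : ℤ) (hq : 2 ≤ q) (D : ℕ) (k : ℕ → ℕ) (hk0 : k 0 = 1)
    (hrec : ∀ i, 1 ≤ i → i ≤ D →
      (k i : ℤ) * (gaussBracket q i)^2 = (k (i-1) : ℤ) * bbI q D (i-1))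
    (n M : ℕ) (hn : 1 ≤ n) (h1 : n*M ≤ D) (h2 : D < n*M + n) :
    ∃ CC : ℤ, (∏ s ∈ Finset.Icc 1 M, gaussBracket q (n*s)) ∣ CC ∧
      (k (n*M) : ℤ) * CC
        = (∏ j ∈ (Finset.range (n*M)).filter (fun j => ¬ j % n = D % n),
            gaussBracket q (D - j))
          * ∏ j ∈ Finset.range (n*M), (q^(j+1) * (q^j * gaussBracket q (D+1-j) - 1)) := by
  classical
  have E : ∀ i, i ≤ D → (k i : ℤ) * ∏ u ∈ Finset.Icc 1 i, (gaussBracket q u)^2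
      = ∏ j ∈ Finset.range i, bbI q D j := by
    intro i
    induction i with
    | zero => intro _; simp [hk0]
    | succ i ih =>
        intro hiD
        have hi := ih (by omega)
        rw [Finset.prod_Icc_succ_top (by omega), Finset.prod_range_succ]
        have hr := hrec (i+1) (by omega) hiD
        simp only [Nat.add_sub_cancel] at hr
        calc (k (i+1) : ℤ) * ((∏ u ∈ Finset.Icc 1 i, (gaussBracket q u)^2)
                * (gaussBracket q (i+1))^2)
            = ((k (i+1) : ℤ) * (gaussBracket q (i+1))^2)
                * ∏ u ∈ Finset.Icc 1 i, (gaussBracket q u)^2 := by ring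
          _ = ((k i : ℤ) * bbI q D i) * ∏ u ∈ Finset.Icc 1 i, (gaussBracket q u)^2 := by
                rw [hr]
          _ = ((k i : ℤ) * ∏ u ∈ Finset.Icc 1 i, (gaussBracket q u)^2) * bbI q D i := by ring
          _ = (∏ j ∈ Finset.range i, bbI q D j) * bbI q D i := by rw [hi]
  have hE := E (n*M) h1
  set P : ℤ := ∏ s ∈ Finset.Icc 1 M, gaussBracket q (n*s) with hP
  set C0 : ℤ := ∏ u ∈ (Finset.Icc 1 (n*M)).filter (fun u => ¬ n ∣ u), (gaussBracket q u)^2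
    with hC0
  -- LHS split
  have hsplitL : ∏ u ∈ Finset.Icc 1 (n*M), (gaussBracket q u)^2 = (P * P) * C0 := by
    rw [← Finset.prod_filter_mul_prod_filter_not (Finset.Icc 1 (n*M)) (fun u => n ∣ u)]
    rw [reindex1 n M hn, Finset.prod_image ?hinj]
    case hinj =>
      intro a _ b _ hab
      exact Nat.eq_of_mul_eq_mul_left (by omega) hab
    rw [Finset.prod_pow]
    ring
  -- RHS split
  have hsplitR : ∏ j ∈ Finset.range (n*M), bbI q D j
      = (P * ∏ j ∈ (Finset.range (n*M)).filter (fun j => ¬ j % n = D % n),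
          gaussBracket q (D - j))
        * ∏ j ∈ Finset.range (n*M), (q^(j+1) * (q^j * gaussBracket q (D+1-j) - 1)) := by
    have hcongr : ∏ j ∈ Finset.range (n*M), bbI q D j
        = ∏ j ∈ Finset.range (n*M),
            (gaussBracket q (D - j) * (q^(j+1) * (q^j * gaussBracket q (D+1-j) - 1))) := by
      refine Finset.prod_congr rfl fun j hj => ?_
      rw [Finset.mem_range] at hj
      exact bbI_eq (by omega)
    rw [hcongr, Finset.prod_mul_distrib]
    congr 1
    rw [← Finset.prod_filter_mul_prod_filter_not (Finset.range (n*M))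
      (fun j => j % n = D % n)]
    congr 1
    rw [reindex2 n M D hn h1 h2, Finset.prod_image ?hinj2]
    case hinj2 =>
      intro a ha b hb hab
      simp only [Finset.mem_coe, Finset.mem_Icc] at ha hb
      have ha' : n * a ≤ D := le_trans (Nat.mul_le_mul_left n ha.2) h1
      have hb' : n * b ≤ D := le_trans (Nat.mul_le_mul_left n hb.2) h1
      have : n * a = n * b := by simp only at hab; omega
      exact Nat.eq_of_mul_eq_mul_left (by omega) this
    refine Finset.prod_congr rfl fun s hs => ?_
    simp only [Finset.mem_Icc] at hs
    have : n * s ≤ D := le_trans (Nat.mul_le_mul_left n hs.2) h1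
    congr 1
    omega
  refine ⟨P * C0, Dvd.intro C0 rfl, ?_⟩
  have hPne : P ≠ 0 := by
    apply Finset.prod_ne_zero_iff.mpr
    intro s hs
    simp only [Finset.mem_Icc] at hs
    exact ne_of_gt (gb_pos hq (by nlinarith [hs.1]))
  apply mul_left_cancel₀ hPne
  rw [hsplitL] at hE
  rw [hsplitR] at hE
  linear_combination hE

lemma not_dvd_of_zmod (Bn : ℕ) (q : ℤ) (hBn : (Bn : ℤ) = q^2 + q + 1) (n : ℕ) [NeZero n]
    (hall : ∀ y : ZMod n, y^2 + y + 1 ≠ 0) : ¬ n ∣ Bn := by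
  intro hdvd
  have h0 : ((Bn : ℤ) : ZMod n) = 0 := by
    rw [Int.cast_natCast, ZMod.natCast_eq_zero_iff]
    exact hdvd
  rw [hBn] at h0
  push_cast at h0
  exact hall ((q : ℤ) : ZMod n) h0

lemma prime_ne_of_not_dvd {ℓ n : ℕ} (hp : ℓ.Prime) (hn : n.Prime) (hℓ : ℓ ∣ n → False)
  : True := trivial

lemma case3 (q : ℤ) (hq : 2 ≤ q) (D : ℕ) (hD : 3 ≤ D) (hD3 : ¬ 3 ∣ D)
    (k : ℕ → ℕ) (hk0 : k 0 = 1)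
    (hrec : ∀ i, 1 ≤ i → i ≤ D →
      (k i : ℤ) * (gaussBracket q i)^2 = (k (i-1) : ℤ) * bbI q D (i-1)) : False := by
  classical
  set M := D / 3 with hM
  have h1 : 3 * M ≤ D := by omega
  have h2 : D < 3 * M + 3 := by omega
  have hM1 : 1 ≤ M := by omega
  -- find prime ℓ ∣ q²+q+1, ℓ ≠ 2, ℓ ≠ 3
  have hBpos : (0:ℤ) ≤ q^2 + q + 1 := by positivity
  set Bn : ℕ := (q^2 + q + 1).toNat with hBndef
  have hBn : (Bn : ℤ) = q^2 + q + 1 := Int.toNat_of_nonneg hBpos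
  have hB7 : 7 ≤ Bn := by
    have : (7:ℤ) ≤ (Bn : ℤ) := by rw [hBn]; nlinarith
    exact_mod_cast this
  have h9 : ¬ (9 ∣ Bn) := not_dvd_of_zmod Bn q hBn 9 (by decide)
  have h2B : ¬ (2 ∣ Bn) := not_dvd_of_zmod Bn q hBn 2 (by decide)
  have hf : Bn.factorization 3 ≤ 1 := by
    by_contra hcon
    push_neg at hcon
    exact h9 (dvd_trans (pow_dvd_pow 3 hcon) (Nat.ordProj_dvd Bn 3))
  set t : ℕ := Bn / 3 ^ Bn.factorization 3 with ht
  have htdvd : t ∣ Bn := Nat.ordCompl_dvd Bn 3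
  have htne1 : t ≠ 1 := by
    intro hcon
    have := Nat.ordProj_mul_ordCompl_eq_self Bn 3
    rw [← ht, hcon, mul_one] at this
    have : Bn ≤ 3 := by
      rw [← this]
      calc (3:ℕ) ^ Bn.factorization 3 ≤ 3 ^ 1 := Nat.pow_le_pow_right (by omega) hf
        _ = 3 := by norm_num
    omega
  set ℓ : ℕ := t.minFac with hℓdef
  have hℓp : ℓ.Prime := Nat.minFac_prime htne1
  have hℓB : ℓ ∣ Bn := dvd_trans (Nat.minFac_dvd t) htdvd
  have hℓ3 : ℓ ≠ 3 := by
    intro hcon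
    have h3t : ¬ (3 ∣ t) := Nat.not_dvd_ordCompl (by norm_num) (by omega)
    exact h3t (hcon ▸ Nat.minFac_dvd t)
  have hℓ2 : ℓ ≠ 2 := by
    intro hcon
    exact h2B (hcon ▸ hℓB)
  haveI : Fact ℓ.Prime := ⟨hℓp⟩
  -- pass to ZMod ℓ
  set x : ZMod ℓ := ((q : ℤ) : ZMod ℓ) with hx
  have hgb3 : ((gaussBracket q 3 : ℤ) : ZMod ℓ) = 0 := by
    have heq : (gaussBracket q 3 : ℤ) = (Bn : ℤ) := by rw [gb_three, hBn]; ring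
    rw [heq, Int.cast_natCast, ZMod.natCast_eq_zero_iff]
    exact hℓB
  have hx1 : 1 + x + x^2 = 0 := by
    have : ((gaussBracket q 3 : ℤ) : ZMod ℓ) = 1 + x + x^2 := by
      rw [gb_three]; push_cast; ring
    rw [this] at hgb3; exact hgb3
  have hx3 : x^3 = 1 := by linear_combination (x - 1) * hx1
  have hx0 : x ≠ 0 := by
    intro hcon
    rw [hcon] at hx1
    simp at hx1
  have hcast3 : ((3:ℕ) : ZMod ℓ) ≠ 0 := by
    intro hcon
    rw [ZMod.natCast_eq_zero_iff] at hcon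
    rcases (Nat.Prime.eq_one_or_self_of_dvd (by norm_num) ℓ hcon) with h | h
    · exact hℓp.one_lt.ne' h
    · exact hℓ3 h
  have hcast2 : ((2:ℕ) : ZMod ℓ) ≠ 0 := by
    intro hcon
    rw [ZMod.natCast_eq_zero_iff] at hcon
    rcases (Nat.Prime.eq_one_or_self_of_dvd (by norm_num) ℓ hcon) with h | h
    · exact hℓp.one_lt.ne' h
    · exact hℓ2 h
  have hxne1 : x ≠ 1 := by
    intro hcon
    rw [hcon] at hx1
    apply hcast3
    push_cast
    linear_combination hx1
  have hx2ne1 : x^2 ≠ 1 := by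
    intro hcon
    apply hxne1
    have : x * x^2 = x^3 := by ring
    rw [hcon, hx3] at this
    linear_combination this
  have h1x : 1 + x ≠ 0 := by
    intro hcon
    apply hxne1
    have : x = -1 := by linear_combination hcon
    rw [this] at hx1
    norm_num at hx1
  have hgbmod : ∀ u : ℕ, ((gaussBracket q u : ℤ) : ZMod ℓ)
      = ((gaussBracket q (u % 3) : ℤ) : ZMod ℓ) := fun u => gb_cast_mod hgb3 u
  have hqpow : ∀ u : ℕ, (x : ZMod ℓ)^u = x^(u % 3) := by
    intro u
    have := qpow_cast_mod (K := ZMod ℓ) hgb3 u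
    push_cast at this
    rw [hx]; exact this
  -- the key identity
  obtain ⟨CC, hdvdCC, hmain⟩ := keyIdentity q hq D k hk0 hrec 3 M (by omega) h1 h2
  -- gb 3 divides CC
  have hgb3CC : (gaussBracket q 3 : ℤ) ∣ CC := by
    refine dvd_trans ?_ hdvdCC
    have h1mem : (1:ℕ) ∈ Finset.Icc 1 M := Finset.mem_Icc.mpr ⟨le_refl 1, hM1⟩
    have := Finset.dvd_prod_of_mem (fun s => gaussBracket q (3*s)) h1mem
    simpa using this
  -- cast hmain to ZMod ℓ
  have hcast : (((k (3*M) : ℤ) * CC : ℤ) : ZMod ℓ) = 0 := by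
    obtain ⟨c, hc⟩ := hgb3CC
    rw [hc]
    push_cast
    rw [show ((gaussBracket q 3 : ℤ) : ZMod ℓ) = 0 from hgb3]
    ring
  rw [hmain] at hcast
  push_cast at hcast
  rcases mul_eq_zero.mp hcast with hzero | hzero
  · -- a factor gb (D - j) with j % 3 ≠ D % 3 is zero
    obtain ⟨j, hjmem, hj0⟩ := Finset.prod_eq_zero_iff.mp hzero
    simp only [Finset.mem_filter, Finset.mem_range] at hjmem
    obtain ⟨hjlt, hjmod⟩ := hjmem
    have hjD : j ≤ D := by omega
    have hr : (D - j) % 3 = 1 ∨ (D - j) % 3 = 2 := by omega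
    rw [show ((gaussBracket q (D - j) : ℤ) : ZMod ℓ)
        = ((gaussBracket q ((D - j) % 3) : ℤ) : ZMod ℓ) from hgbmod (D - j)] at hj0
    rcases hr with hr | hr
    · rw [hr, gb_one] at hj0
      norm_num at hj0
    · rw [hr, gb_two] at hj0
      push_cast at hj0
      rw [show ((q:ℤ) : ZMod ℓ) = x from hx.symm] at hj0
      exact h1x (by linear_combination hj0)
  · -- a factor q^(j+1) * (q^j * gb (D+1-j) - 1) is zero
    obtain ⟨j, hjmem, hj0⟩ := Finset.prod_eq_zero_iff.mp hzero
    simp only [Finset.mem_range] at hjmem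
    have hjD : j < D := by omega
    push_cast at hj0
    rw [← hx] at hj0
    rcases mul_eq_zero.mp hj0 with hph | hph
    · exact pow_ne_zero _ hx0 hph
    · -- x^j * gb(D+1-j) - 1 = 0
      have hgbj : ((gaussBracket q (D+1-j) : ℤ) : ZMod ℓ)
          = ((gaussBracket q ((D+1-j) % 3) : ℤ) : ZMod ℓ) := hgbmod (D+1-j)
      rw [hgbj, hqpow j] at hph
      have hD2cases : D % 3 = 1 ∨ D % 3 = 2 := by omega
      have hj3 : j % 3 = 0 ∨ j % 3 = 1 ∨ j % 3 = 2 := by omega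
      have hxq : ((q:ℤ) : ZMod ℓ) = x := hx.symm
      rcases hD2cases with hDm | hDm <;> rcases hj3 with hjm | hjm | hjm
      · rw [show (D+1-j) % 3 = 2 by omega, gb_two, hjm] at hph
        push_cast at hph
        rw [hxq] at hph
        exact hx0 (by linear_combination hph)
      · rw [show (D+1-j) % 3 = 1 by omega, gb_one, hjm] at hph
        push_cast at hph
        exact hxne1 (by linear_combination hph)
      · rw [show (D+1-j) % 3 = 0 by omega, gb_zero, hjm] at hph
        push_cast at hph
        norm_num at hph
      · rw [show (D+1-j) % 3 = 0 by omega, gb_zero, hjm] at hph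
        push_cast at hph
        norm_num at hph
      · rw [show (D+1-j) % 3 = 2 by omega, gb_two, hjm] at hph
        push_cast at hph
        rw [hxq] at hph
        apply hcast2
        push_cast
        linear_combination -hph + hx1
      · rw [show (D+1-j) % 3 = 1 by omega, gb_one, hjm] at hph
        push_cast at hph
        exact hx2ne1 (by linear_combination hph)

lemma two_pull (s : Finset ℕ) (f : ℕ → ℤ) (h : ∀ x ∈ s, f x % 4 = 2) :
    ∃ w : ℤ, (∏ x ∈ s, f x) = 2^s.card * w ∧ w % 2 = 1 := by
  classical
  induction s using Finset.cons_induction with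
  | empty => exact ⟨1, by simp, by norm_num⟩
  | cons a s ha ih =>
      obtain ⟨w, hw, hw2⟩ := ih (fun x hx => h x (Finset.mem_cons_of_mem hx))
      have hfa := h a (Finset.mem_cons_self a s)
      obtain ⟨u, hu⟩ : ∃ u : ℤ, f a = 2 * (2 * u + 1) := ⟨f a / 4, by omega⟩
      refine ⟨(2 * u + 1) * w, ?_, ?_⟩
      · rw [Finset.prod_cons, Finset.card_cons, hw, hu, pow_succ]
        ring
      · rw [Int.mul_emod, hw2]
        have h1 : (2 * u + 1) % 2 = 1 := by omega
        rw [h1]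
        norm_num

lemma case2 (q : ℤ) (hq : 2 ≤ q) (D : ℕ) (hD : 4 ≤ D) (hD2 : ¬ 2 ∣ D)
    (k : ℕ → ℕ) (hk0 : k 0 = 1)
    (hrec : ∀ i, 1 ≤ i → i ≤ D →
      (k i : ℤ) * (gaussBracket q i)^2 = (k (i-1) : ℤ) * bbI q D (i-1)) : False := by
  classical
  set m := D / 2 with hm
  have h1 : 2 * m ≤ D := by omega
  have h2 : D < 2 * m + 2 := by omega
  have hm1 : 1 ≤ m := by omega
  have hApos : (0:ℤ) ≤ q + 1 := by linarith
  set An : ℕ := (q + 1).toNat with hAndef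
  have hAn : (An : ℤ) = q + 1 := Int.toNat_of_nonneg hApos
  have hA3 : 3 ≤ An := by
    have : (3:ℤ) ≤ (An : ℤ) := by rw [hAn]; linarith
    exact_mod_cast this
  set a : ℕ := An.factorization 2 with hadef
  set t : ℕ := An / 2 ^ a with htdef
  have htdvd : t ∣ An := Nat.ordCompl_dvd An 2
  obtain ⟨CC, hdvdCC, hmain⟩ := keyIdentity q hq D k hk0 hrec 2 m (by omega) h1 h2
  have h2gb2 : (2:ℤ) ∣ gaussBracket q 2 → ((gaussBracket q 2 : ℤ) : ZMod 2) = 0 := by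
    intro hd
    rw [ZMod.intCast_zmod_eq_zero_iff_dvd]
    exact_mod_cast hd
  by_cases ht : t = 1
  · -- q + 1 is a power of two
    have hAn2a : An = 2 ^ a := by
      have := Nat.ordProj_mul_ordCompl_eq_self An 2
      rw [← htdef, ht, mul_one, ← hadef] at this
      omega
    have ha2 : 2 ≤ a := by
      by_contra hcon
      push_neg at hcon
      have hle : (2:ℕ)^a ≤ 2^1 := Nat.pow_le_pow_right (by norm_num) (by omega)
      omega
    have h4 : (4:ℤ) ∣ (q + 1) := by
      have h4n : (4:ℕ) ∣ An := by
        rw [hAn2a]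
        exact dvd_trans (by norm_num : (4:ℕ) ∣ 2^2) (pow_dvd_pow 2 ha2)
      have := Int.natCast_dvd_natCast.mpr h4n
      rw [hAn] at this
      exact_mod_cast this
    have h4gb2 : (4:ℤ) ∣ gaussBracket q 2 := by
      rw [gb_two, add_comm]; exact h4
    have hP4 : (4:ℤ)^m ∣ ∏ s ∈ Finset.Icc 1 m, gaussBracket q (2*s) := by
      have hdvd : ∏ _s ∈ Finset.Icc 1 m, (4:ℤ) ∣ ∏ s ∈ Finset.Icc 1 m, gaussBracket q (2*s) :=
        Finset.prod_dvd_prod_of_dvd _ _ (fun s _ => dvd_trans h4gb2 (gb_dvd q 2 s))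
      simpa [Finset.prod_const, Nat.card_Icc] using hdvd
    have h4CC : (4:ℤ)^m ∣ (k (2*m) : ℤ) * CC := ((hP4.trans hdvdCC).mul_left _)
    rw [hmain] at h4CC
    -- decompose the right-hand side
    set R2 : ℤ := ∏ j ∈ (Finset.range (2*m)).filter (fun j => ¬ j % 2 = D % 2),
        gaussBracket q (D - j) with hR2
    set f : ℕ → ℤ := fun j => q^j * gaussBracket q (D+1-j) - 1 with hf
    have hsplitf : ∏ j ∈ Finset.range (2*m), (q^(j+1) * (q^j * gaussBracket q (D+1-j) - 1))
        = (∏ j ∈ Finset.range (2*m), q^(j+1))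
          * ((∏ j ∈ (Finset.range (2*m)).filter (fun j => j % 2 = 1), f j)
            * ∏ j ∈ (Finset.range (2*m)).filter (fun j => ¬ j % 2 = 1), f j) := by
      rw [Finset.prod_filter_mul_prod_filter_not (Finset.range (2*m)) (fun j => j % 2 = 1) f]
      rw [← Finset.prod_mul_distrib]
    -- mod 4 facts
    have hgb2mod4 : ((gaussBracket q 2 : ℤ) : ZMod 4) = 0 := by
      rw [ZMod.intCast_zmod_eq_zero_iff_dvd]
      exact_mod_cast h4gb2
    have hy : ((q : ℤ) : ZMod 4) = -1 := by
      have : (((q + 1 : ℤ)) : ZMod 4) = 0 := by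
        rw [ZMod.intCast_zmod_eq_zero_iff_dvd]
        exact_mod_cast h4
      push_cast at this
      linear_combination this
    have hFmod : ∀ j ∈ (Finset.range (2*m)).filter (fun j => j % 2 = 1), f j % 4 = 2 := by
      intro j hj
      simp only [Finset.mem_filter, Finset.mem_range] at hj
      obtain ⟨hjlt, hjodd⟩ := hj
      have hcast : ((f j : ℤ) : ZMod 4) = ((2 : ℤ) : ZMod 4) := by
        simp only [hf]
        push_cast
        rw [gb_cast_mod hgb2mod4 (D+1-j), show (D+1-j) % 2 = 1 by omega, gb_one,
          qpow_cast_mod hgb2mod4 j, show j % 2 = 1 by omega, hy]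
        push_cast
        decide
      have := (ZMod.intCast_eq_intCast_iff (f j) 2 4).mp hcast
      have h24 : (2:ℤ) % 4 = 2 := by norm_num
      rw [Int.ModEq] at this
      omega
    obtain ⟨w, hw, hw2⟩ := two_pull _ f hFmod
    have hcardodd : ((Finset.range (2*m)).filter (fun j => j % 2 = 1)).card = m := by
      rw [show (Finset.range (2*m)).filter (fun j => j % 2 = 1)
          = (Finset.range m).image (fun s => 2*s+1) from by
        ext j
        simp only [Finset.mem_filter, Finset.mem_range, Finset.mem_image]
        constructor
        · rintro ⟨hj1, hj2⟩; exact ⟨j/2, by omega, by omega⟩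
        · rintro ⟨s, hs, rfl⟩; omega]
      rw [Finset.card_image_of_injective _ (fun a b hab => by omega), Finset.card_range]
    rw [hcardodd] at hw
    set V : ℤ := R2 * (∏ j ∈ Finset.range (2*m), q^(j+1))
        * ∏ j ∈ (Finset.range (2*m)).filter (fun j => ¬ j % 2 = 1), f j with hV
    have hRW : R2 * ∏ j ∈ Finset.range (2*m), (q^(j+1) * (q^j * gaussBracket q (D+1-j) - 1))
        = 2^m * (V * w) := by
      rw [hsplitf, hw, hV]
      ring
    rw [hRW] at h4CC
    have h4CC' : (2:ℤ)^m * 2^m ∣ 2^m * (V * w) := by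
      have : (4:ℤ)^m = 2^m * 2^m := by rw [← mul_pow]; norm_num
      rwa [this] at h4CC
    have hVW : (2:ℤ)^m ∣ V * w :=
      (mul_dvd_mul_iff_left (pow_ne_zero m (two_ne_zero))).mp h4CC'
    have h2VW : (2:ℤ) ∣ V * w := dvd_trans (dvd_pow_self (2:ℤ) (n := m) (by omega)) hVW
    have h2VW' : ((2:ℕ):ℤ) ∣ V * w := by exact_mod_cast h2VW
    rcases (Int.Prime.dvd_mul' Nat.prime_two h2VW') with h2V | h2w
    · -- V is odd: contradiction via ZMod 2
      have hgb2m2 : ((gaussBracket q 2 : ℤ) : ZMod 2) = 0 :=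
        h2gb2 (dvd_trans (by norm_num) h4gb2)
      have hz : ((q : ℤ) : ZMod 2) ≠ 0 := by
        intro hcon
        rw [gb_two] at hgb2m2
        push_cast at hgb2m2
        rw [hcon] at hgb2m2
        norm_num at hgb2m2
      have hV0 : ((V : ℤ) : ZMod 2) = 0 := by
        rw [ZMod.intCast_zmod_eq_zero_iff_dvd]
        exact_mod_cast h2V
      rw [hV, hR2] at hV0
      push_cast at hV0
      rcases mul_eq_zero.mp hV0 with hz0 | hz0
      · rcases mul_eq_zero.mp hz0 with hz1 | hz1
        · -- R2 factor
          obtain ⟨j, hjmem, hj0⟩ := Finset.prod_eq_zero_iff.mp hz1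
          simp only [Finset.mem_filter, Finset.mem_range] at hjmem
          rw [gb_cast_mod hgb2m2 (D - j), show (D - j) % 2 = 1 by omega, gb_one] at hj0
          norm_num at hj0
        · obtain ⟨j, _, hj0⟩ := Finset.prod_eq_zero_iff.mp hz1
          exact hz (pow_eq_zero_iff (by omega) |>.mp hj0)
      · obtain ⟨j, hjmem, hj0⟩ := Finset.prod_eq_zero_iff.mp hz0
        simp only [Finset.mem_filter, Finset.mem_range] at hjmem
        simp only [hf] at hj0
        push_cast at hj0
        rw [gb_cast_mod hgb2m2 (D+1-j), show (D+1-j) % 2 = 0 by omega, gb_zero] at hj0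
        push_cast at hj0
        ring_nf at hj0
        simp at hj0
    · obtain ⟨c, hc⟩ := h2w
      have hc' : w = 2 * c := by exact_mod_cast hc
      omega
  · -- q + 1 has an odd prime factor ℓ
    set ℓ : ℕ := t.minFac with hℓdef
    have hℓp : ℓ.Prime := Nat.minFac_prime ht
    have hℓA : ℓ ∣ An := dvd_trans (Nat.minFac_dvd t) htdvd
    have hℓ2 : ℓ ≠ 2 := by
      intro hcon
      have h2t : ¬ (2 ∣ t) := Nat.not_dvd_ordCompl (by norm_num) (by omega)
      exact h2t (hcon ▸ Nat.minFac_dvd t)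
    haveI : Fact ℓ.Prime := ⟨hℓp⟩
    set x : ZMod ℓ := ((q : ℤ) : ZMod ℓ) with hx
    have hgb2 : ((gaussBracket q 2 : ℤ) : ZMod ℓ) = 0 := by
      have heq : (gaussBracket q 2 : ℤ) = (An : ℤ) := by rw [gb_two, hAn]; ring
      rw [heq, Int.cast_natCast, ZMod.natCast_eq_zero_iff]
      exact hℓA
    have hx1 : 1 + x = 0 := by
      have : ((gaussBracket q 2 : ℤ) : ZMod ℓ) = 1 + x := by rw [gb_two]; push_cast; rfl
      rw [this] at hgb2; exact hgb2
    have hx0 : x ≠ 0 := by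
      intro hcon
      rw [hcon] at hx1
      norm_num at hx1
    have hcast2 : ((2:ℕ) : ZMod ℓ) ≠ 0 := by
      intro hcon
      rw [ZMod.natCast_eq_zero_iff] at hcon
      rcases (Nat.Prime.eq_one_or_self_of_dvd (by norm_num) ℓ hcon) with h | h
      · exact hℓp.one_lt.ne' h
      · exact hℓ2 h
    have hgb2CC : (gaussBracket q 2 : ℤ) ∣ CC := by
      refine dvd_trans ?_ hdvdCC
      have h1mem : (1:ℕ) ∈ Finset.Icc 1 m := Finset.mem_Icc.mpr ⟨le_refl 1, hm1⟩
      have := Finset.dvd_prod_of_mem (fun s => gaussBracket q (2*s)) h1mem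
      simpa using this
    have hcast : (((k (2*m) : ℤ) * CC : ℤ) : ZMod ℓ) = 0 := by
      obtain ⟨c, hc⟩ := hgb2CC
      rw [hc]
      push_cast
      rw [show ((gaussBracket q 2 : ℤ) : ZMod ℓ) = 0 from hgb2]
      ring
    rw [hmain] at hcast
    push_cast at hcast
    rcases mul_eq_zero.mp hcast with hzero | hzero
    · obtain ⟨j, hjmem, hj0⟩ := Finset.prod_eq_zero_iff.mp hzero
      simp only [Finset.mem_filter, Finset.mem_range] at hjmem
      rw [gb_cast_mod hgb2 (D - j), show (D - j) % 2 = 1 by omega, gb_one] at hj0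
      norm_num at hj0
    · obtain ⟨j, hjmem, hj0⟩ := Finset.prod_eq_zero_iff.mp hzero
      simp only [Finset.mem_range] at hjmem
      push_cast at hj0
      rw [← hx] at hj0
      rcases mul_eq_zero.mp hj0 with hph | hph
      · exact pow_ne_zero _ hx0 hph
      · rw [gb_cast_mod hgb2 (D+1-j)] at hph
        have hxq : ((q:ℤ) : ZMod ℓ) = x := hx.symm
        rcases (show j % 2 = 0 ∨ j % 2 = 1 by omega) with hje | hjo
        · rw [show (D+1-j) % 2 = 0 by omega, gb_zero] at hph
          push_cast at hph
          ring_nf at hph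
          simp at hph
        · rw [show (D+1-j) % 2 = 1 by omega, gb_one] at hph
          have hxj : x ^ j = x ^ (j % 2) := by
            have := qpow_cast_mod (K := ZMod ℓ) hgb2 j
            push_cast at this
            rw [hx]; exact this
          rw [hxj, show j % 2 = 1 by omega] at hph
          push_cast at hph
          apply hcast2
          push_cast
          linear_combination -hph + hx1
end DRGaux

section Bridge

open SimpleGraph DRGaux

theorem stmt2' (q : ℤ) (hq : 2 ≤ q) (D : ℕ) (hD : 4 ≤ D) (hD6 : ¬ (6 ∣ D))
    {X : Type*} [Fintype X] (G : SimpleGraph X) (p : ℕ → ℕ → ℕ → ℕ) :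
    ¬ HasClassicalParams G D p q (q : ℚ)
      ((q : ℚ) ^ 2 * ((q : ℚ) ^ D - 1) / ((q : ℚ) - 1)) := by
  classical
  intro h
  obtain ⟨⟨hconn, hdle, ⟨x₀, y₀, hxy⟩, hp⟩, hq0, hqm1, hc, hb⟩ := h
  set k : ℕ → ℕ := fun i => (Finset.univ.filter (fun z => G.dist x₀ z = i)).card with hk
  -- k 0 = 1
  have hk0 : k 0 = 1 := by
    simp only [hk]
    have : (Finset.univ.filter (fun z => G.dist x₀ z = 0)) = {x₀} := by
      ext z
      simp only [Finset.mem_filter, Finset.mem_univ, true_and, Finset.mem_singleton]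
      rw [hconn.dist_eq_zero_iff]
      exact eq_comm
    rw [this, Finset.card_singleton]
  -- counting identity in ℕ
  have hcount : ∀ i, 1 ≤ i → i ≤ D →
      k i * p i 1 (i-1) = k (i-1) * p (i-1) 1 i := by
    intro i h1i hiD
    have h1D : 1 ≤ D := by omega
    have hi1D : i - 1 ≤ D := by omega
    have hA : ∀ y : X, G.dist x₀ y = i →
        ((Finset.univ.filter (fun z => G.dist x₀ z = i-1 ∧ G.dist y z = 1)).card
          = p i 1 (i-1)) := by
      intro y hy
      have hp1 := hp i 1 (i-1) hiD h1D hi1D y x₀ (by rw [SimpleGraph.dist_comm]; exact hy)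
      rw [← hp1]
      have hset : {z : X | G.dist y z = 1 ∧ G.dist x₀ z = i - 1}
          = ↑(Finset.univ.filter (fun z => G.dist x₀ z = i-1 ∧ G.dist y z = 1)) := by
        ext z
        simp only [Set.mem_setOf_eq, Finset.coe_filter, Finset.mem_univ, true_and,
          Set.mem_setOf_eq]
        exact and_comm
      rw [hset, Set.ncard_coe_finset]
    have hB : ∀ z : X, G.dist x₀ z = i - 1 →
        ((Finset.univ.filter (fun y => G.dist x₀ y = i ∧ G.dist z y = 1)).card
          = p (i-1) 1 i) := by
      intro z hz
      have hp1 := hp (i-1) 1 i hi1D h1D hiD z x₀ (by rw [SimpleGraph.dist_comm]; exact hz)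
      rw [← hp1]
      have hset : {y : X | G.dist z y = 1 ∧ G.dist x₀ y = i}
          = ↑(Finset.univ.filter (fun y => G.dist x₀ y = i ∧ G.dist z y = 1)) := by
        ext y
        simp only [Set.mem_setOf_eq, Finset.coe_filter, Finset.mem_univ, true_and,
          Set.mem_setOf_eq]
        exact and_comm
      rw [hset, Set.ncard_coe_finset]
    calc k i * p i 1 (i-1)
        = ∑ _y ∈ Finset.univ.filter (fun z => G.dist x₀ z = i), p i 1 (i-1) := by
          rw [Finset.sum_const, smul_eq_mul]
      _ = ∑ y ∈ Finset.univ.filter (fun z => G.dist x₀ z = i),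
            (Finset.univ.filter (fun z => G.dist x₀ z = i-1 ∧ G.dist y z = 1)).card := by
          refine Finset.sum_congr rfl fun y hy => ?_
          rw [hA y (by simpa using hy)]
      _ = ∑ y : X, ∑ z : X,
            (if G.dist x₀ y = i ∧ G.dist x₀ z = i-1 ∧ G.dist y z = 1 then 1 else 0) := by
          rw [Finset.sum_filter]
          refine Finset.sum_congr rfl fun y _ => ?_
          by_cases h1 : G.dist x₀ y = i
          · rw [if_pos h1, Finset.card_filter]
            refine Finset.sum_congr rfl fun z _ => ?_
            by_cases h2 : G.dist x₀ z = i-1 ∧ G.dist y z = 1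
            · rw [if_pos h2, if_pos ⟨h1, h2⟩]
            · rw [if_neg h2, if_neg (by tauto)]
          · rw [if_neg h1]
            symm
            refine Finset.sum_eq_zero fun z _ => ?_
            rw [if_neg (by tauto)]
      _ = ∑ z : X, ∑ y : X,
            (if G.dist x₀ y = i ∧ G.dist x₀ z = i-1 ∧ G.dist y z = 1 then 1 else 0) :=
          Finset.sum_comm
      _ = ∑ z : X, ∑ y : X,
            (if G.dist x₀ z = i-1 ∧ G.dist x₀ y = i ∧ G.dist z y = 1 then 1 else 0) := by
          refine Finset.sum_congr rfl fun z _ => Finset.sum_congr rfl fun y _ => ?_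
          have hdc : G.dist y z = G.dist z y := SimpleGraph.dist_comm
          by_cases h1 : G.dist x₀ y = i ∧ G.dist x₀ z = i-1 ∧ G.dist y z = 1
          · rw [if_pos h1, if_pos ⟨h1.2.1, h1.1, by rw [← hdc]; exact h1.2.2⟩]
          · rw [if_neg h1, if_neg (by rw [← hdc] at *; tauto)]
      _ = ∑ z ∈ Finset.univ.filter (fun z => G.dist x₀ z = i-1),
            (Finset.univ.filter (fun y => G.dist x₀ y = i ∧ G.dist z y = 1)).card := by
          rw [Finset.sum_filter]
          refine Finset.sum_congr rfl fun z _ => ?_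
          by_cases h1 : G.dist x₀ z = i-1
          · rw [if_pos h1, Finset.card_filter]
            refine Finset.sum_congr rfl fun y _ => ?_
            by_cases h2 : G.dist x₀ y = i ∧ G.dist z y = 1
            · rw [if_pos ⟨h1, h2⟩, if_pos h2]
            · rw [if_neg (by tauto), if_neg h2]
          · rw [if_neg h1]
            refine Finset.sum_eq_zero fun y _ => ?_
            rw [if_neg (by tauto)]
      _ = ∑ z ∈ Finset.univ.filter (fun z => G.dist x₀ z = i-1), p (i-1) 1 i := by
          refine Finset.sum_congr rfl fun z hz => ?_
          rw [hB z (by simpa using hz)]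
      _ = k (i-1) * p (i-1) 1 i := by
          rw [Finset.sum_const, smul_eq_mul]
  -- convert the parameters to ℤ
  have hqQ1 : ((q:ℚ)) ≠ 1 := by
    have : (1:ℚ) < (q:ℚ) := by exact_mod_cast (by omega : (1:ℤ) < q)
    exact ne_of_gt this
  have hgbD : ((gaussBracket q D : ℤ) : ℚ) = ((q:ℚ)^D - 1)/((q:ℚ)-1) := by
    rw [gaussBracket]
    push_cast
    exact geom_sum_eq hqQ1 D
  have hc' : ∀ i, 1 ≤ i → i ≤ D → (p i 1 (i-1) : ℤ) = gaussBracket q i ^ 2 := by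
    intro i h1i hiD
    have hgb : gaussBracket q i = q * gaussBracket q (i-1) + 1 := by
      conv_lhs => rw [show i = (i-1)+1 by omega]
      exact gb_succ q (i-1)
    have hcc := hc i h1i hiD
    have : ((p i 1 (i-1) : ℕ) : ℚ) = ((gaussBracket q i ^ 2 : ℤ) : ℚ) := by
      rw [hcc, hgb]
      push_cast
      ring
    exact_mod_cast this
  have hb' : ∀ j, j + 1 ≤ D → (p j 1 (j+1) : ℤ) = bbI q D j := by
    intro j hj
    have hbb := hb j hj
    have hβ : (q : ℚ) ^ 2 * ((q : ℚ) ^ D - 1) / ((q : ℚ) - 1)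
        = (q:ℚ)^2 * ((gaussBracket q D : ℤ) : ℚ) := by
      rw [hgbD, mul_div_assoc]
    rw [hβ] at hbb
    have : ((p j 1 (j+1) : ℕ) : ℚ) = ((bbI q D j : ℤ) : ℚ) := by
      rw [hbb, bbI]
      push_cast
      ring
    exact_mod_cast this
  have hrec : ∀ i, 1 ≤ i → i ≤ D →
      (k i : ℤ) * (gaussBracket q i)^2 = (k (i-1) : ℤ) * bbI q D (i-1) := by
    intro i h1i hiD
    have hZ : (k i : ℤ) * (p i 1 (i-1) : ℤ) = (k (i-1) : ℤ) * (p (i-1) 1 i : ℤ) := by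
      exact_mod_cast congrArg (Nat.cast (R := ℤ)) (hcount i h1i hiD)
    rw [hc' i h1i hiD] at hZ
    have hidx : p (i-1) 1 i = p (i-1) 1 ((i-1)+1) := by rw [show (i-1)+1 = i by omega]
    rw [hidx] at hZ
    rw [hb' (i-1) (by omega)] at hZ
    exact hZ
  -- finish by the two arithmetic cases
  rcases (show ¬ 3 ∣ D ∨ ¬ 2 ∣ D by omega) with h3 | h2
  · exact case3 q hq D (by omega) h3 k hk0 hrec
  · exact case2 q hq D hD h2 k hk0 hrec

end Bridge

theorem stmt2 (q : ℤ) (hq : 2 ≤ q) (D : ℕ) (hD : 4 ≤ D) (hD6 : ¬ (6 ∣ D))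
    {X : Type*} [Fintype X] (G : SimpleGraph X) (p : ℕ → ℕ → ℕ → ℕ) :
    ¬ HasClassicalParams G D p q (q : ℚ)
      ((q : ℚ) ^ 2 * ((q : ℚ) ^ D - 1) / ((q : ℚ) - 1)) := by
  exact stmt2' q hq D hD hD6 G p
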